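/- Let n ≥ 3 and let τ be the automorphism of SL(n,ℤ) given by τ(X) = (Xᵀ)⁻¹. Then the Reidemeister number R(τ) is infinite; that is, there are infinitely many τ-twisted conjugacy classes in SL(n,ℤ). -/

import Mathlib

theorem stmt11 (n : ℕ) (hn : 3 ≤ n)
    (τ : Matrix.SpecialLinearGroup (Fin n) ℤ ≃* Matrix.SpecialLinearGroup (Fin n) ℤ)
    (hτ : ∀ X : Matrix.SpecialLinearGroup (Fin n) ℤ,
      τ X = (Matrix.SpecialLinearGroup.transpose X)⁻¹) :
    Infinite (Quot (fun x y : Matrix.SpecialLinearGroup (Fin n) ℤ =>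
      ∃ g : Matrix.SpecialLinearGroup (Fin n) ℤ, y = g * x * (τ g)⁻¹)) := by
  haveI : NeZero n := ⟨by omega⟩
  set G := Matrix.SpecialLinearGroup (Fin n) ℤ
  have htr_inv : ∀ h : G, Matrix.SpecialLinearGroup.transpose (h⁻¹)
      = (Matrix.SpecialLinearGroup.transpose h)⁻¹ := by
    intro h
    apply Subtype.ext
    show ((h⁻¹ : G) : Matrix (Fin n) (Fin n) ℤ).transpose = _
    rw [Matrix.SpecialLinearGroup.coe_inv, Matrix.adjugate_transpose]
    rw [Matrix.SpecialLinearGroup.coe_inv]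
    rfl
  have hττ : ∀ g : G, τ (τ g) = g := by
    intro g
    rw [hτ, hτ, htr_inv, inv_inv]
    apply Subtype.ext
    show (((Matrix.SpecialLinearGroup.transpose g) : G) : Matrix (Fin n) (Fin n) ℤ).transpose = _
    rw [Matrix.SpecialLinearGroup.coe_transpose, Matrix.transpose_transpose]
  -- trace of coercion is conjugation-invariant
  have key : ∀ a b : G, ((a * b * a⁻¹ : G) : Matrix (Fin n) (Fin n) ℤ).trace
      = ((b : G) : Matrix (Fin n) (Fin n) ℤ).trace := by
    intro a b
    have e1 : a * b * a⁻¹ = a * (b * a⁻¹) := by group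
    rw [e1, Matrix.SpecialLinearGroup.coe_mul a (b * a⁻¹), Matrix.trace_mul_comm,
      ← Matrix.SpecialLinearGroup.coe_mul (b * a⁻¹) a, inv_mul_cancel_right]
  set F : G → ℤ := fun x => Matrix.trace ((τ x * x : G) : Matrix (Fin n) (Fin n) ℤ) with hF
  have hinv : ∀ x y : G, (∃ g : G, y = g * x * (τ g)⁻¹) → F x = F y := by
    rintro x y ⟨g, rfl⟩
    have h2 : τ (g * x * (τ g)⁻¹) * (g * x * (τ g)⁻¹) = τ g * (τ x * x) * (τ g)⁻¹ := by
      rw [_root_.map_mul, _root_.map_mul, _root_.map_inv, hττ]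
      group
    simp only [hF]
    rw [h2, key]
  have h01 : (0 : Fin n) ≠ 1 := by
    simp [Fin.ext_iff, Fin.val_one', Nat.mod_eq_of_lt (by omega : 1 < n)]
  set T : ℕ → G := fun k => ⟨Matrix.transvection 0 1 (k : ℤ),
    Matrix.det_transvection_of_ne 0 1 h01 (k : ℤ)⟩ with hT
  have htrans : ∀ k : ℕ, (Matrix.transvection (0 : Fin n) 1 (k : ℤ)).transpose
      = Matrix.transvection 1 0 (k : ℤ) := by
    intro k
    ext a b
    simp [Matrix.transvection, Matrix.single, Matrix.transpose_apply, and_comm,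
      Matrix.one_apply, eq_comm]
  have hτT : ∀ k : ℕ, τ (T k) = ⟨Matrix.transvection 1 0 (-(k : ℤ)),
      Matrix.det_transvection_of_ne 1 0 h01.symm _⟩ := by
    intro k
    rw [hτ]
    refine inv_eq_iff_mul_eq_one.mpr ?_
    apply Subtype.ext
    refine (Matrix.SpecialLinearGroup.coe_mul _ _).trans ?_
    show (Matrix.transvection (0 : Fin n) 1 (k : ℤ)).transpose
      * Matrix.transvection 1 0 (-(k : ℤ)) = 1
    rw [htrans, Matrix.transvection_mul_transvection_same _ _ h01.symm]
    simp
  have hFT : ∀ k : ℕ, F (T k) = (n : ℤ) - (k : ℤ) ^ 2 := by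
    intro k
    simp only [hF]
    rw [Matrix.SpecialLinearGroup.coe_mul, hτT]
    show Matrix.trace (Matrix.transvection (1 : Fin n) 0 (-(k : ℤ))
      * Matrix.transvection 0 1 (k : ℤ)) = (n : ℤ) - (k : ℤ) ^ 2
    simp only [Matrix.transvection, Matrix.add_mul, Matrix.mul_add, Matrix.one_mul,
      Matrix.mul_one, Matrix.single_mul_single_same, Matrix.trace_add, Matrix.trace_one,
      Matrix.trace_single_eq_of_ne _ _ _ h01, Matrix.trace_single_eq_of_ne _ _ _ h01.symm,
      Matrix.trace_single_eq_same]
    rw [Fintype.card_fin]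
    ring
  set r : G → G → Prop := fun x y => ∃ g : G, y = g * x * (τ g)⁻¹ with hr
  let f : Quot r → ℤ := Quot.lift F hinv
  apply Infinite.of_injective (fun k : ℕ => Quot.mk r (T k))
  intro k l hkl
  have h3 : F (T k) = F (T l) := congrArg f hkl
  rw [hFT, hFT] at h3
  have h5 : (k : ℤ) = l := by nlinarith [sq_nonneg ((k:ℤ) - l), sq_nonneg ((k:ℤ) + l)]
  exact_mod_cast h5
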